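/- Let S, M ⊆ K be keyword sets with nonnegative weights wt_s, wt_m, and let w* ∈ K be any keyword. Then TSim(S,M) ≤ Σ_{w ∈ S ∩ M, w < w*} wt_s(w)·wt_m(w) + min( wtsum_s(w*)·maxwt_m(w*), wtsum_m(w*)·maxwt_s(w*) ). Consequently, for any λ ∈ ℝ, if the already-computed partial similarity over common keywords smaller than w* plus the upper bound min(wtsum_s(w*)·maxwt_m(w*), wtsum_m(w*)·maxwt_s(w*)) on the contribution of the unseen keywords (those ≥ w*) is strictly less than λ, then TSim(S,M) < λ. (Bound estimation for unseen keywords; Theorem 2.) -/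

import Mathlib

open Finset

/-- Textual similarity: `TSim(S,M) = Σ_{w ∈ S ∩ M} wt_s(w)·wt_m(w)`. -/
noncomputable def TSim {K : Type*} [LinearOrder K]
    (S M : Finset K) (wts wtm : K → ℝ) : ℝ :=
  ∑ w ∈ S ∩ M, wts w * wtm w

/-- `wtsum_s(w) = Σ_{w' ∈ S, w ≤ w'} wt_s(w')`. -/
noncomputable def wtsum {K : Type*} [LinearOrder K]
    (S : Finset K) (wts : K → ℝ) (w : K) : ℝ :=
  ∑ w' ∈ S.filter (fun w' => w ≤ w'), wts w'

/-- `maxwt_s(w) = max_{w' ∈ S, w ≤ w'} wt_s(w')`, taken to be `0` if no such `w'` exists. -/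
noncomputable def maxwt {K : Type*} [LinearOrder K]
    (S : Finset K) (wts : K → ℝ) (w : K) : ℝ :=
  (S.filter (fun w' => w ≤ w')).fold max 0 wts

lemma le_maxwt {K : Type*} [LinearOrder K]
    (S : Finset K) (wts : K → ℝ) (w a : K) (ha : a ∈ S) (hle : w ≤ a) :
    wts a ≤ maxwt S wts w := by
  have hmem : a ∈ S.filter (fun w' => w ≤ w') := by
    simp [Finset.mem_filter, ha, hle]
  exact (Finset.le_fold_max _).mpr (Or.inr ⟨a, hmem, le_rfl⟩)

lemma unseen_part_le {K : Type*} [LinearOrder K]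
    (S M : Finset K) (wts wtm : K → ℝ)
    (hs : ∀ w, 0 ≤ wts w) (hm : ∀ w, 0 ≤ wtm w) (wstar : K) :
    (∑ w ∈ (S ∩ M).filter (fun w => wstar ≤ w), wts w * wtm w) ≤
      wtsum S wts wstar * maxwt M wtm wstar := by
  rw [wtsum, Finset.sum_mul]
  calc (∑ w ∈ (S ∩ M).filter (fun w => wstar ≤ w), wts w * wtm w)
      ≤ ∑ w ∈ (S ∩ M).filter (fun w => wstar ≤ w), wts w * maxwt M wtm wstar := by
        apply Finset.sum_le_sum
        intro i hi
        simp only [Finset.mem_filter, Finset.mem_inter] at hi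
        exact mul_le_mul_of_nonneg_left (le_maxwt M wtm wstar i hi.1.2 hi.2) (hs i)
    _ ≤ ∑ w ∈ S.filter (fun w' => wstar ≤ w'), wts w * maxwt M wtm wstar := by
        apply Finset.sum_le_sum_of_subset_of_nonneg
        · intro x hx
          simp only [Finset.mem_filter, Finset.mem_inter] at hx ⊢
          exact ⟨hx.1.1, hx.2⟩
        · intro i hi _
          have h0 : (0:ℝ) ≤ maxwt M wtm wstar := by
            rw [maxwt]
            exact (Finset.le_fold_max _).mpr (Or.inl le_rfl)
          exact mul_nonneg (hs i) h0

theorem unseen_keywords_bound_estimation {K : Type*} [LinearOrder K]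
    (S M : Finset K) (wts wtm : K → ℝ)
    (hs : ∀ w, 0 ≤ wts w) (hm : ∀ w, 0 ≤ wtm w)
    (wstar : K) :
    TSim S M wts wtm ≤
      (∑ w ∈ (S ∩ M).filter (fun w => w < wstar), wts w * wtm w) +
        min (wtsum S wts wstar * maxwt M wtm wstar)
            (wtsum M wtm wstar * maxwt S wts wstar) ∧
    ∀ lam : ℝ,
      (∑ w ∈ (S ∩ M).filter (fun w => w < wstar), wts w * wtm w) +
          min (wtsum S wts wstar * maxwt M wtm wstar)
              (wtsum M wtm wstar * maxwt S wts wstar) < lam →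
      TSim S M wts wtm < lam := by
  have hsplit : TSim S M wts wtm =
      (∑ w ∈ (S ∩ M).filter (fun w => w < wstar), wts w * wtm w) +
      (∑ w ∈ (S ∩ M).filter (fun w => wstar ≤ w), wts w * wtm w) := by
    rw [TSim, ← Finset.sum_filter_add_sum_filter_not (S ∩ M) (fun w => w < wstar)]
    congr 1
    apply Finset.sum_congr _ (fun _ _ => rfl)
    ext x
    simp [not_lt]
  have h1 := unseen_part_le S M wts wtm hs hm wstar
  have h2 := unseen_part_le M S wtm wts hm hs wstar
  rw [Finset.inter_comm] at h2
  have h2' : (∑ w ∈ (S ∩ M).filter (fun w => wstar ≤ w), wts w * wtm w) ≤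
      wtsum M wtm wstar * maxwt S wts wstar := by
    calc _ = ∑ w ∈ (S ∩ M).filter (fun w => wstar ≤ w), wtm w * wts w := by
            simp [mul_comm]
      _ ≤ _ := h2
  have hmain : TSim S M wts wtm ≤
      (∑ w ∈ (S ∩ M).filter (fun w => w < wstar), wts w * wtm w) +
        min (wtsum S wts wstar * maxwt M wtm wstar)
            (wtsum M wtm wstar * maxwt S wts wstar) := by
    rw [hsplit]
    exact add_le_add (le_refl _) (le_min h1 h2')
  exact ⟨hmain, fun lam hl => lt_of_le_of_lt hmain hl⟩
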